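/- The centrally extended bracket [φ⊗Uⁿ, ψ⊗Uᵐ] = (φ·Uⁿψ − ψ·Uᵐφ)⊗U^{n+m} + n·δ_{n+m,0}·(∫_X φ·Uⁿψ dμ)·c on the space A(X,T) ⊕ ℂc defines a Lie algebra (bracket is antisymmetric, bilinear, and satisfies the Jacobi identity), and ℂc lies in its center. -/

import Mathlib

set_option linter.unusedSectionVars false
set_option synthInstance.maxHeartbeats 400000
set_option maxHeartbeats 1000000

noncomputable section
open MeasureTheory

variable {X : Type*} [TopologicalSpace X] [MeasurableSpace X]

/-- `n`-th iterate of a homeomorphism, `n : ℕ`. -/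
def iterH (T : X ≃ₜ X) : ℕ → X ≃ₜ X
  | 0 => Homeomorph.refl X
  | n + 1 => (iterH T n).trans T

/-- `n`-th power of a homeomorphism, `n : ℤ` (so `zpowH T n = Tⁿ`). -/
def zpowH (T : X ≃ₜ X) : ℤ → X ≃ₜ X
  | Int.ofNat n => iterH T n
  | Int.negSucc n => (iterH T (n + 1)).symm

/-- The operator `Uⁿ` on continuous functions: `(Uⁿψ)(x) = ψ(Tⁿ x)`. -/
def Un (T : X ≃ₜ X) (n : ℤ) (ψ : C(X, ℂ)) : C(X, ℂ) := ψ.comp (zpowH T n)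

/-- The crossed product multiplication on `A(X,T) = ⊕ₙ C(X) ⊗ Uⁿ`,
`(φ⊗Uⁿ)·(ψ⊗Uᵐ) = (φ·Uⁿψ)⊗U^(n+m)`; the element `φ⊗Uⁿ` is `Finsupp.single n φ`. -/
def amul (T : X ≃ₜ X) (a b : ℤ →₀ C(X, ℂ)) : ℤ →₀ C(X, ℂ) :=
  a.sum fun n φ => b.sum fun m ψ => Finsupp.single (n + m) (φ * Un T n ψ)
/-- The Lie bracket `[a,b] = ab - ba` on `A(X,T)`. -/
def abr (T : X ≃ₜ X) (a b : ℤ →₀ C(X, ℂ)) : ℤ →₀ C(X, ℂ) := amul T a b - amul T b a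
/-- The 2-cocycle `α(φ⊗Uⁿ, ψ⊗Uᵐ) = n·δ_{n+m,0}·∫ φ·Uⁿψ dμ`, extended bilinearly. -/
def acoc (T : X ≃ₜ X) (μ : Measure X) (a b : ℤ →₀ C(X, ℂ)) : ℂ :=
  a.sum fun n φ => b.sum fun m ψ =>
    if n + m = 0 then (n : ℂ) * ∫ x, (φ * Un T n ψ) x ∂μ else 0
/-- The centrally extended bracket on `Ã(X,T) = A(X,T) ⊕ ℂc` (the central element `c`
is `(0, 1)`): `[a,b] = (ab - ba, α(a,b))`. -/
def brE (T : X ≃ₜ X) (μ : Measure X) (a b : (ℤ →₀ C(X, ℂ)) × ℂ) : (ℤ →₀ C(X, ℂ)) × ℂ :=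
  (abr T a.1 b.1, acoc T μ a.1 b.1)

lemma iterH_apply (T : X ≃ₜ X) (n : ℕ) (x : X) :
    iterH T n x = ((T.toEquiv : Equiv.Perm X) ^ n) x := by
  induction n with
  | zero => simp [iterH]
  | succ n ih => simp [iterH, pow_succ', Equiv.Perm.mul_apply, ih]

lemma zpowH_apply (T : X ≃ₜ X) (n : ℤ) (x : X) :
    zpowH T n x = ((T.toEquiv : Equiv.Perm X) ^ n) x := by
  cases n with
  | ofNat n => simpa [zpowH] using iterH_apply T n x
  | negSucc n =>
      have h : ∀ y : X, iterH T (n+1) y = ((T.toEquiv : Equiv.Perm X) ^ (n+1)) y :=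
        iterH_apply T (n+1)
      have : (iterH T (n+1)).toEquiv = ((T.toEquiv : Equiv.Perm X) ^ (n+1)) :=
        Equiv.ext h
      simp only [zpowH, zpow_negSucc]
      have h2 : (iterH T (n+1)).symm x = ((T.toEquiv : Equiv.Perm X) ^ (n+1)).symm x := by
        rw [← this]; rfl
      rw [h2]; rfl

lemma zpowH_zpowH (T : X ≃ₜ X) (a b : ℤ) (x : X) :
    zpowH T a (zpowH T b x) = zpowH T (b + a) x := by
  simp only [zpowH_apply, ← Equiv.Perm.mul_apply, ← zpow_add, add_comm]

@[simp] lemma zpowH_zero (T : X ≃ₜ X) (x : X) : zpowH T 0 x = x := by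
  simp [zpowH_apply]

lemma zpowH_one (T : X ≃ₜ X) (x : X) : zpowH T 1 x = T x := by
  simp [zpowH_apply]

lemma zpowH_neg_one (T : X ≃ₜ X) (x : X) : zpowH T (-1) x = T.symm x := by
  rw [zpowH_apply]
  simp [zpow_neg_one]

@[simp] lemma Un_apply (T : X ≃ₜ X) (n : ℤ) (ψ : C(X, ℂ)) (x : X) :
    Un T n ψ x = ψ (zpowH T n x) := rfl

section Integ
variable [CompactSpace X] [T2Space X] [BorelSpace X]
variable (T : X ≃ₜ X) (μ : Measure X) [IsProbabilityMeasure μ]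

lemma cm_integrable (f : C(X, ℂ)) : Integrable f μ :=
  f.continuous.integrable_of_hasCompactSupport (HasCompactSupport.of_compactSpace _)

variable (hinv : ∀ f : C(X, ℂ), ∫ x, f (T x) ∂μ = ∫ x, f x ∂μ)
include hinv

lemma hinv_symm (g : C(X, ℂ)) : ∫ x, g (T.symm x) ∂μ = ∫ x, g x ∂μ := by
  have := hinv (g.comp (T.symm : C(X, X)))
  simpa using this.symm

lemma intU (n : ℤ) (f : C(X, ℂ)) : ∫ x, f (zpowH T n x) ∂μ = ∫ x, f x ∂μ := by
  induction n using Int.induction_on with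
  | zero => simp
  | succ n ih =>
      have h1 : ∀ x, f (zpowH T (n+1) x) = (Un T n f) (T x) := by
        intro x
        rw [Un_apply, ← zpowH_one T x, zpowH_zpowH, add_comm]
      calc ∫ x, f (zpowH T (n+1) x) ∂μ = ∫ x, (Un T n f) (T x) ∂μ := by simp_rw [h1]
        _ = ∫ x, (Un T n f) x ∂μ := hinv _
        _ = ∫ x, f x ∂μ := ih
  | pred n ih =>
      have h1 : ∀ x, f (zpowH T (-n-1) x) = (Un T (-n) f) (T.symm x) := by
        intro x
        rw [Un_apply, ← zpowH_neg_one T x, zpowH_zpowH]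
        ring_nf
      calc ∫ x, f (zpowH T (-n-1) x) ∂μ = ∫ x, (Un T (-n) f) (T.symm x) ∂μ := by simp_rw [h1]
        _ = ∫ x, (Un T (-n) f) x ∂μ := hinv_symm T μ hinv _
        _ = ∫ x, f x ∂μ := ih
end Integ

-- Un algebra
@[simp] lemma Un_zero_fn (T : X ≃ₜ X) (n : ℤ) : Un T n (0 : C(X, ℂ)) = 0 := by
  ext x; simp

lemma Un_add (T : X ≃ₜ X) (n : ℤ) (f g : C(X, ℂ)) :
    Un T n (f + g) = Un T n f + Un T n g := by ext x; simp

lemma Un_mul (T : X ≃ₜ X) (n : ℤ) (f g : C(X, ℂ)) :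
    Un T n (f * g) = Un T n f * Un T n g := by ext x; simp

lemma Un_smul (T : X ≃ₜ X) (n : ℤ) (s : ℂ) (f : C(X, ℂ)) :
    Un T n (s • f) = s • Un T n f := by ext x; simp

lemma Un_Un (T : X ≃ₜ X) (n m : ℤ) (f : C(X, ℂ)) :
    Un T n (Un T m f) = Un T (n + m) f := by
  ext x; simp [zpowH_zpowH, add_comm]

@[simp] lemma Un_zero_idx (T : X ≃ₜ X) (f : C(X, ℂ)) : Un T 0 f = f := by
  ext x; simp


-- amul bilinearity
@[simp] lemma amul_zero_left (T : X ≃ₜ X) (b : ℤ →₀ C(X, ℂ)) : amul T 0 b = 0 := by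
  simp [amul]

@[simp] lemma amul_zero_right (T : X ≃ₜ X) (a : ℤ →₀ C(X, ℂ)) : amul T a 0 = 0 := by
  simp [amul]

lemma amul_add_left (T : X ≃ₜ X) (a a' b : ℤ →₀ C(X, ℂ)) :
    amul T (a + a') b = amul T a b + amul T a' b := by
  unfold amul
  rw [Finsupp.sum_add_index]
  · intro n _; simp
  · intro n _ φ φ'
    rw [← Finsupp.sum_add]
    congr 1; ext m ψ
    rw [add_mul, Finsupp.single_add]

lemma amul_add_right (T : X ≃ₜ X) (a b b' : ℤ →₀ C(X, ℂ)) :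
    amul T a (b + b') = amul T a b + amul T a b' := by
  unfold amul
  rw [← Finsupp.sum_add]
  congr 1; ext n φ
  rw [Finsupp.sum_add_index]
  · intro m _; simp
  · intro m _ ψ ψ'
    rw [Un_add, mul_add, Finsupp.single_add]

lemma amul_smul_left (T : X ≃ₜ X) (s : ℂ) (a b : ℤ →₀ C(X, ℂ)) :
    amul T (s • a) b = s • amul T a b := by
  unfold amul
  rw [Finsupp.sum_smul_index' (h0 := fun n => by simp), Finsupp.smul_sum (M := ℤ →₀ C(X, ℂ)) (R := ℂ)]
  refine Finsupp.sum_congr fun n _ => ?_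
  rw [Finsupp.smul_sum (M := ℤ →₀ C(X, ℂ)) (R := ℂ)]
  refine Finsupp.sum_congr fun m _ => ?_
  rw [smul_mul_assoc, Finsupp.smul_single]

lemma amul_smul_right (T : X ≃ₜ X) (s : ℂ) (a b : ℤ →₀ C(X, ℂ)) :
    amul T a (s • b) = s • amul T a b := by
  unfold amul
  rw [Finsupp.smul_sum (M := ℤ →₀ C(X, ℂ)) (R := ℂ)]
  refine Finsupp.sum_congr fun n _ => ?_
  rw [Finsupp.sum_smul_index' (h0 := fun m => by simp), Finsupp.smul_sum (M := ℤ →₀ C(X, ℂ)) (R := ℂ)]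
  refine Finsupp.sum_congr fun m _ => ?_
  rw [Un_smul, mul_smul_comm, Finsupp.smul_single]

lemma amul_single_single (T : X ≃ₜ X) (n m : ℤ) (φ ψ : C(X, ℂ)) :
    amul T (Finsupp.single n φ) (Finsupp.single m ψ) =
      Finsupp.single (n + m) (φ * Un T n ψ) := by
  unfold amul
  rw [Finsupp.sum_single_index, Finsupp.sum_single_index]
  · simp
  · rw [Finsupp.sum_single_index] <;> simp

section Acoc
variable [CompactSpace X] [T2Space X] [BorelSpace X]
variable (T : X ≃ₜ X) (μ : Measure X) [IsProbabilityMeasure μ]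

lemma int_add (f g : C(X, ℂ)) :
    ∫ x, (f + g) x ∂μ = ∫ x, f x ∂μ + ∫ x, g x ∂μ := by
  simp only [ContinuousMap.add_apply]
  exact integral_add (cm_integrable μ f) (cm_integrable μ g)

lemma int_smul (s : ℂ) (f : C(X, ℂ)) :
    ∫ x, (s • f) x ∂μ = s * ∫ x, f x ∂μ := by
  simp only [ContinuousMap.smul_apply]
  rw [integral_smul]
  simp

@[simp] lemma acoc_zero_left (b : ℤ →₀ C(X, ℂ)) : acoc T μ 0 b = 0 := by
  simp [acoc]

@[simp] lemma acoc_zero_right (a : ℤ →₀ C(X, ℂ)) : acoc T μ a 0 = 0 := by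
  simp [acoc]

lemma acoc_add_left (a a' b : ℤ →₀ C(X, ℂ)) :
    acoc T μ (a + a') b = acoc T μ a b + acoc T μ a' b := by
  unfold acoc
  rw [Finsupp.sum_add_index]
  · intro n _; simp
  · intro n _ φ φ'
    rw [← Finsupp.sum_add]
    refine Finsupp.sum_congr fun m _ => ?_
    by_cases h : n + m = 0
    · simp only [h, if_true]
      rw [add_mul, int_add, mul_add]
    · simp [h]

lemma acoc_add_right (a b b' : ℤ →₀ C(X, ℂ)) :
    acoc T μ a (b + b') = acoc T μ a b + acoc T μ a b' := by
  unfold acoc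
  rw [← Finsupp.sum_add]
  refine Finsupp.sum_congr fun n _ => ?_
  rw [Finsupp.sum_add_index]
  · intro m _; simp
  · intro m _ ψ ψ'
    by_cases h : n + m = 0
    · simp only [h, if_true]
      rw [Un_add, mul_add, int_add, mul_add]
    · simp [h]

lemma acoc_smul_left (s : ℂ) (a b : ℤ →₀ C(X, ℂ)) :
    acoc T μ (s • a) b = s * acoc T μ a b := by
  unfold acoc
  rw [Finsupp.sum_smul_index' (h0 := fun n => by simp), ← smul_eq_mul,
    Finsupp.smul_sum (M := ℂ) (R := ℂ)]
  refine Finsupp.sum_congr fun n _ => ?_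
  rw [Finsupp.smul_sum (M := ℂ) (R := ℂ)]
  refine Finsupp.sum_congr fun m _ => ?_
  by_cases h : n + m = 0
  · simp only [h, if_true, smul_eq_mul]
    rw [smul_mul_assoc, int_smul]
    ring
  · simp [h]

lemma acoc_smul_right (s : ℂ) (a b : ℤ →₀ C(X, ℂ)) :
    acoc T μ a (s • b) = s * acoc T μ a b := by
  unfold acoc
  rw [← smul_eq_mul, Finsupp.smul_sum (M := ℂ) (R := ℂ)]
  refine Finsupp.sum_congr fun n _ => ?_
  rw [Finsupp.sum_smul_index' (h0 := fun m => by simp), Finsupp.smul_sum (M := ℂ) (R := ℂ)]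
  refine Finsupp.sum_congr fun m _ => ?_
  by_cases h : n + m = 0
  · simp only [h, if_true, smul_eq_mul]
    rw [Un_smul, mul_smul_comm, int_smul]
    ring
  · simp [h]

lemma acoc_single_single (n m : ℤ) (φ ψ : C(X, ℂ)) :
    acoc T μ (Finsupp.single n φ) (Finsupp.single m ψ) =
      if n + m = 0 then (n : ℂ) * ∫ x, (φ * Un T n ψ) x ∂μ else 0 := by
  unfold acoc
  rw [Finsupp.sum_single_index, Finsupp.sum_single_index]
  · by_cases h : n + m = 0 <;> simp [h]
  · rw [Finsupp.sum_single_index] <;> by_cases h : n + m = 0 <;> simp [h]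
end Acoc

lemma amul_assoc (T : X ≃ₜ X) (a b c : ℤ →₀ C(X, ℂ)) :
    amul T (amul T a b) c = amul T a (amul T b c) := by
  induction a using Finsupp.induction_linear with
  | zero => simp
  | add f g hf hg => rw [amul_add_left, amul_add_left, amul_add_left, hf, hg]
  | single n φ =>
    induction b using Finsupp.induction_linear with
    | zero => simp
    | add f g hf hg =>
        rw [amul_add_right, amul_add_left, amul_add_left, amul_add_right, hf, hg]
    | single m ψ =>
      induction c using Finsupp.induction_linear with
      | zero => simp
      | add f g hf hg =>
          rw [amul_add_right, amul_add_right, amul_add_right, hf, hg]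
      | single k χ =>
          rw [amul_single_single, amul_single_single, amul_single_single,
            amul_single_single, Un_mul, Un_Un, add_assoc, mul_assoc]

-- neg and sub lemmas
lemma fneg (a : ℤ →₀ C(X, ℂ)) : (-1 : ℂ) • a = -a := by ext i x; simp

lemma fsub (a b : ℤ →₀ C(X, ℂ)) : a - b = a + (-1 : ℂ) • b := by
  ext i x; simp [sub_eq_add_neg]

lemma amul_sub_left (T : X ≃ₜ X) (a a' b : ℤ →₀ C(X, ℂ)) :
    amul T (a - a') b = amul T a b - amul T a' b := by
  rw [fsub a a', amul_add_left, amul_smul_left, fsub (amul T a b) (amul T a' b)]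

lemma amul_sub_right (T : X ≃ₜ X) (a b b' : ℤ →₀ C(X, ℂ)) :
    amul T a (b - b') = amul T a b - amul T a b' := by
  rw [fsub b b', amul_add_right, amul_smul_right, fsub (amul T a b) (amul T a b')]

section Acoc2
variable [CompactSpace X] [T2Space X] [BorelSpace X]
variable (T : X ≃ₜ X) (μ : Measure X) [IsProbabilityMeasure μ]

lemma acoc_sub_left (a a' b : ℤ →₀ C(X, ℂ)) :
    acoc T μ (a - a') b = acoc T μ a b - acoc T μ a' b := by
  rw [fsub a a', acoc_add_left, acoc_smul_left]; ring

variable (hinv : ∀ f : C(X, ℂ), ∫ x, f (T x) ∂μ = ∫ x, f x ∂μ)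
include hinv

lemma int_shift (p : ℤ) (f : C(X, ℂ)) : ∫ x, (Un T p f) x ∂μ = ∫ x, f x ∂μ := by
  simpa using intU T μ hinv p f

lemma acoc_antisymm (a b : ℤ →₀ C(X, ℂ)) : acoc T μ a b = -acoc T μ b a := by
  induction a using Finsupp.induction_linear with
  | zero => simp
  | add f g hf hg => rw [acoc_add_left, acoc_add_right, hf, hg]; ring
  | single n φ =>
    induction b using Finsupp.induction_linear with
    | zero => simp
    | add f g hf hg => rw [acoc_add_right, acoc_add_left, hf, hg]; ring
    | single m ψ =>
      rw [acoc_single_single, acoc_single_single]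
      by_cases h : n + m = 0
      · rw [if_pos h, if_pos (by omega)]
        have key : ∫ x, (φ * Un T n ψ) x ∂μ = ∫ x, (ψ * Un T m φ) x ∂μ := by
          rw [← int_shift T μ hinv m (φ * Un T n ψ), Un_mul, Un_Un,
            show m + n = 0 by omega, Un_zero_idx, mul_comm]
        rw [key]
        have hc : (n : ℂ) = -(m : ℂ) := by
          have : (((n + m : ℤ)) : ℂ) = 0 := by rw [h]; simp
          push_cast at this; linear_combination this
        rw [hc]; ring
      · rw [if_neg h, if_neg (by omega)]; ring
end Acoc2

-- abr lemmas
@[simp] lemma abr_zero_left (T : X ≃ₜ X) (b : ℤ →₀ C(X, ℂ)) : abr T 0 b = 0 := by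
  unfold abr; rw [amul_zero_left, amul_zero_right]; ext i x; simp

@[simp] lemma abr_zero_right (T : X ≃ₜ X) (a : ℤ →₀ C(X, ℂ)) : abr T a 0 = 0 := by
  unfold abr; rw [amul_zero_left, amul_zero_right]; ext i x; simp

lemma abr_add_left (T : X ≃ₜ X) (a a' b : ℤ →₀ C(X, ℂ)) :
    abr T (a + a') b = abr T a b + abr T a' b := by
  unfold abr
  rw [amul_add_left, amul_add_right]
  abel

lemma abr_add_right (T : X ≃ₜ X) (a b b' : ℤ →₀ C(X, ℂ)) :
    abr T a (b + b') = abr T a b + abr T a b' := by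
  unfold abr
  rw [amul_add_right, amul_add_left]
  abel

lemma abr_smul_left (T : X ≃ₜ X) (s : ℂ) (a b : ℤ →₀ C(X, ℂ)) :
    abr T (s • a) b = s • abr T a b := by
  unfold abr
  rw [amul_smul_left, amul_smul_right]
  ext i x; simp [mul_sub]

lemma abr_smul_right (T : X ≃ₜ X) (s : ℂ) (a b : ℤ →₀ C(X, ℂ)) :
    abr T a (s • b) = s • abr T a b := by
  unfold abr
  rw [amul_smul_left, amul_smul_right]
  ext i x; simp [mul_sub]

lemma abr_jacobi (T : X ≃ₜ X) (a b c : ℤ →₀ C(X, ℂ)) :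
    abr T (abr T a b) c + abr T (abr T b c) a + abr T (abr T c a) b = 0 := by
  unfold abr
  rw [amul_sub_left, amul_sub_right, amul_sub_left, amul_sub_right,
    amul_sub_left, amul_sub_right]
  simp only [amul_assoc]
  abel

section Jac
variable [CompactSpace X] [T2Space X] [BorelSpace X]
variable (T : X ≃ₜ X) (μ : Measure X) [IsProbabilityMeasure μ]
variable (hinv : ∀ f : C(X, ℂ), ∫ x, f (T x) ∂μ = ∫ x, f x ∂μ)
include hinv

lemma coc_jacobi_single (n m k : ℤ) (φ ψ χ : C(X, ℂ)) :
    acoc T μ (abr T (Finsupp.single n φ) (Finsupp.single m ψ)) (Finsupp.single k χ)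
    + acoc T μ (abr T (Finsupp.single m ψ) (Finsupp.single k χ)) (Finsupp.single n φ)
    + acoc T μ (abr T (Finsupp.single k χ) (Finsupp.single n φ)) (Finsupp.single m ψ) = 0 := by
  unfold abr
  rw [amul_single_single, amul_single_single, amul_single_single, amul_single_single,
    amul_single_single, amul_single_single, acoc_sub_left, acoc_sub_left, acoc_sub_left,
    acoc_single_single, acoc_single_single, acoc_single_single, acoc_single_single,
    acoc_single_single, acoc_single_single]
  by_cases h : n + m + k = 0
  · rw [if_pos (show n + m + k = 0 by omega), if_pos (show m + n + k = 0 by omega),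
      if_pos (show m + k + n = 0 by omega), if_pos (show k + m + n = 0 by omega),
      if_pos (show k + n + m = 0 by omega), if_pos (show n + k + m = 0 by omega)]
    have E3 : ∫ x, ((ψ * Un T m χ) * Un T (m + k) φ) x ∂μ
        = ∫ x, ((φ * Un T n ψ) * Un T (n + m) χ) x ∂μ := by
      rw [← int_shift T μ hinv n ((ψ * Un T m χ) * Un T (m + k) φ), Un_mul, Un_mul, Un_Un,
        Un_Un, show n + (m + k) = 0 by omega, Un_zero_idx]
      congr 1; ring
    have E5 : ∫ x, ((χ * Un T k φ) * Un T (k + n) ψ) x ∂μ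
        = ∫ x, ((φ * Un T n ψ) * Un T (n + m) χ) x ∂μ := by
      rw [← int_shift T μ hinv (n + m) ((χ * Un T k φ) * Un T (k + n) ψ), Un_mul, Un_mul,
        Un_Un, Un_Un, show n + m + k = 0 from h, Un_zero_idx,
        show n + m + (k + n) = n by omega]
      congr 1; ring
    have E4 : ∫ x, ((χ * Un T k ψ) * Un T (k + m) φ) x ∂μ
        = ∫ x, ((ψ * Un T m φ) * Un T (m + n) χ) x ∂μ := by
      rw [← int_shift T μ hinv (n + m) ((χ * Un T k ψ) * Un T (k + m) φ), Un_mul, Un_mul,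
        Un_Un, Un_Un, show n + m + k = 0 from h, Un_zero_idx,
        show n + m + (k + m) = m by omega, show n + m = m + n by omega]
      congr 1; ring
    have E6 : ∫ x, ((φ * Un T n χ) * Un T (n + k) ψ) x ∂μ
        = ∫ x, ((ψ * Un T m φ) * Un T (m + n) χ) x ∂μ := by
      rw [← int_shift T μ hinv m ((φ * Un T n χ) * Un T (n + k) ψ), Un_mul, Un_mul,
        Un_Un, Un_Un, show m + (n + k) = 0 by omega]
      rw [Un_zero_idx]
      congr 1; ring
    rw [E3, E4, E5, E6]
    have hc : (n : ℂ) + m + k = 0 := by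
      have : (((n + m + k : ℤ)) : ℂ) = 0 := by rw [h]; simp
      push_cast at this; linear_combination this
    push_cast
    linear_combination (2 * (∫ x, ((φ * Un T n ψ) * Un T (n + m) χ) x ∂μ)
      - 2 * (∫ x, ((ψ * Un T m φ) * Un T (m + n) χ) x ∂μ)) * hc
  · rw [if_neg (show ¬(n + m + k = 0) by omega), if_neg (show ¬(m + n + k = 0) by omega),
      if_neg (show ¬(m + k + n = 0) by omega), if_neg (show ¬(k + m + n = 0) by omega),
      if_neg (show ¬(k + n + m = 0) by omega), if_neg (show ¬(n + k + m = 0) by omega)]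
    ring
end Jac

section Jac2
variable [CompactSpace X] [T2Space X] [BorelSpace X]
variable (T : X ≃ₜ X) (μ : Measure X) [IsProbabilityMeasure μ]
variable (hinv : ∀ f : C(X, ℂ), ∫ x, f (T x) ∂μ = ∫ x, f x ∂μ)
include hinv

lemma coc_jacobi (a b c : ℤ →₀ C(X, ℂ)) :
    acoc T μ (abr T a b) c + acoc T μ (abr T b c) a + acoc T μ (abr T c a) b = 0 := by
  induction a using Finsupp.induction_linear with
  | zero => simp
  | add f g hf hg =>
      rw [abr_add_left, abr_add_right, acoc_add_left, acoc_add_right, acoc_add_left]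
      linear_combination hf + hg
  | single n φ =>
    induction b using Finsupp.induction_linear with
    | zero => simp
    | add f g hf hg =>
        rw [abr_add_right, abr_add_left, acoc_add_left, acoc_add_left, acoc_add_right]
        linear_combination hf + hg
    | single m ψ =>
      induction c using Finsupp.induction_linear with
      | zero => simp
      | add f g hf hg =>
          rw [abr_add_right, abr_add_left, acoc_add_left, acoc_add_right, acoc_add_left]
          linear_combination hf + hg
      | single k χ => exact coc_jacobi_single T μ hinv n m k φ ψ χ
end Jac2


lemma abr_antisymm (T : X ≃ₜ X) (a b : ℤ →₀ C(X, ℂ)) : abr T a b = -abr T b a := by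
  unfold abr; ext i x; simp

/-- the centrally extended bracket on `Ã(X,T) = A(X,T) ⊕ ℂc` is bilinear,
antisymmetric, satisfies the Jacobi identity, and `ℂc` lies in the center. -/
theorem extended_bracket_lie_algebra [CompactSpace X] [T2Space X] [BorelSpace X]
    (T : X ≃ₜ X) (μ : Measure X) [IsProbabilityMeasure μ]
    (hinv : ∀ f : C(X, ℂ), ∫ x, f (T x) ∂μ = ∫ x, f x ∂μ) :
    (∀ a b : (ℤ →₀ C(X, ℂ)) × ℂ, brE T μ a b = -brE T μ b a) ∧
    (∀ a a' b : (ℤ →₀ C(X, ℂ)) × ℂ, brE T μ (a + a') b = brE T μ a b + brE T μ a' b) ∧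
    (∀ (s : ℂ) (a b : (ℤ →₀ C(X, ℂ)) × ℂ), brE T μ (s • a) b = s • brE T μ a b) ∧
    (∀ a b b' : (ℤ →₀ C(X, ℂ)) × ℂ, brE T μ a (b + b') = brE T μ a b + brE T μ a b') ∧
    (∀ (s : ℂ) (a b : (ℤ →₀ C(X, ℂ)) × ℂ), brE T μ a (s • b) = s • brE T μ a b) ∧
    (∀ a b c : (ℤ →₀ C(X, ℂ)) × ℂ,
      brE T μ (brE T μ a b) c + brE T μ (brE T μ b c) a + brE T μ (brE T μ c a) b = 0) ∧
    (∀ (t : ℂ) (b : (ℤ →₀ C(X, ℂ)) × ℂ), brE T μ ((0 : ℤ →₀ C(X, ℂ)), t) b = 0) := by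
  refine ⟨?_, ?_, ?_, ?_, ?_, ?_, ?_⟩
  · intro a b
    have h1 := abr_antisymm T a.1 b.1
    have h2 := acoc_antisymm T μ hinv a.1 b.1
    simp only [brE, Prod.neg_mk, h1, h2]
  · intro a a' b
    simp only [brE, Prod.fst_add, Prod.mk_add_mk, abr_add_left, acoc_add_left]
  · intro s a b
    simp only [brE, Prod.smul_fst, Prod.smul_mk, abr_smul_left, acoc_smul_left, smul_eq_mul]
  · intro a b b'
    simp only [brE, Prod.fst_add, Prod.mk_add_mk, abr_add_right, acoc_add_right]
  · intro s a b
    simp only [brE, Prod.smul_fst, Prod.smul_mk, abr_smul_right, acoc_smul_right, smul_eq_mul]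
  · intro a b c
    have h1 := abr_jacobi T a.1 b.1 c.1
    have h2 := coc_jacobi T μ hinv a.1 b.1 c.1
    simp only [brE, Prod.mk_add_mk, h1, h2, Prod.mk_eq_zero]
    exact ⟨trivial, trivial⟩
  · intro t b
    simp only [brE, abr_zero_left, acoc_zero_left, Prod.mk_eq_zero]
    exact ⟨trivial, trivial⟩
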